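/- The group ℤ/p³ℤ × (ℤ/pℤ)^{2λ-3}, for λ ≥ 2 and p prime, is not isomorphic to 1 + m for any finite local commutative ring (A, m) with residue field F_{p^λ}. -/

import Mathlib

open IsLocalRing

section Aux

variable {A : Type*} [CommRing A] [IsLocalRing A] [Finite A]

/-- The characteristic prime lies in the maximal ideal. -/
lemma aux_p_mem (p lam : ℕ) (hp : p.Prime) (hlam : 1 ≤ lam)
    (hres : Nat.card (ResidueField A) = p ^ lam) :
    (p : A) ∈ maximalIdeal A := by
  haveI : Finite (ResidueField A) := Quotient.finite _
  haveI : Fintype (ResidueField A) := Fintype.ofFinite _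
  have h0 : ((p : ResidueField A)) ^ lam = 0 := by
    have : ((p ^ lam : ℕ) : ResidueField A) = 0 := by
      rw [← hres, Nat.card_eq_fintype_card]
      exact Nat.cast_card_eq_zero _
    push_cast at this
    exact this
  have hp0 : (p : ResidueField A) = 0 := by
    exact pow_eq_zero_iff (by omega) |>.mp h0
  have : residue A (p : A) = 0 := by
    rw [map_natCast]; exact hp0
  exact Ideal.Quotient.eq_zero_iff_mem.mp this

/-- The maximal ideal of a finite local ring is nilpotent. -/
lemma aux_nilpotent : ∃ n : ℕ, (maximalIdeal A) ^ n = ⊥ := by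
  obtain ⟨n, hn⟩ := IsArtinianRing.isNilpotent_jacobson_bot (R := A)
  refine ⟨n, ?_⟩
  rwa [jacobson_eq_maximalIdeal ⊥ bot_ne_top] at hn

/-- Nakayama-type stabilization: if `m^(i+1) = m^i` then `m^i = ⊥`. -/
lemma aux_stab {i : ℕ} (h : (maximalIdeal A) ^ (i + 1) = (maximalIdeal A) ^ i) :
    (maximalIdeal A) ^ i = ⊥ := by
  obtain ⟨n, hn⟩ := aux_nilpotent (A := A)
  have key : ∀ k, (maximalIdeal A) ^ (i + k) = (maximalIdeal A) ^ i := by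
    intro k
    induction k with
    | zero => rfl
    | succ k ih =>
      have : i + (k + 1) = (i + k) + 1 := by ring
      rw [this, pow_succ, ih, ← pow_succ, h]
  have h1 : (maximalIdeal A) ^ i = (maximalIdeal A) ^ (i + n) := (key n).symm
  rw [h1, pow_add, hn, Ideal.mul_bot]

/-- If `m^(i+1) ≠ m^i` then the quotient `m^i / m^(i+1)` has at least `|residue field|`
elements. -/
lemma aux_quot_card (i : ℕ) (hne : (maximalIdeal A) ^ (i + 1) ≠ (maximalIdeal A) ^ i) :
    Nat.card (ResidueField A) ≤
      Nat.card ((((maximalIdeal A) ^ i : Ideal A)) ⧸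
        (Submodule.comap ((maximalIdeal A) ^ i : Ideal A).subtype
          ((maximalIdeal A) ^ (i + 1)))) := by
  set m := maximalIdeal A with hm
  have hle : m ^ (i + 1) ≤ m ^ i := Ideal.pow_le_pow_right i.le_succ
  obtain ⟨v, hv, hv'⟩ := SetLike.exists_of_lt (lt_of_le_of_ne hle hne)
  set Mi : Submodule A A := (m ^ i : Ideal A) with hMi
  set N : Submodule A ↥Mi := Submodule.comap Mi.subtype (m ^ (i + 1)) with hN
  -- the map a ↦ a • v from A to Mi
  set g : A →ₗ[A] ↥Mi := LinearMap.toSpanSingleton A ↥Mi ⟨v, hv⟩ with hg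
  have hmemN : ∀ a ∈ maximalIdeal A, g a ∈ N := by
    intro a ha
    have hva : v * a ∈ m ^ (i + 1) := by
      have h' : v * a ∈ m ^ i * m := Ideal.mul_mem_mul hv ha
      rwa [← pow_succ] at h'
    simp only [hN, Submodule.mem_comap, Submodule.subtype_apply, hg,
      LinearMap.toSpanSingleton_apply, SetLike.val_smul, smul_eq_mul]
    rwa [mul_comm] at hva
  -- the induced map from the residue field
  set ψ : (A ⧸ maximalIdeal A) →ₗ[A] (↥Mi ⧸ N) :=
    Submodule.mapQ (maximalIdeal A) N g hmemN with hψ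
  have hinj : Function.Injective ψ := by
    rw [← LinearMap.ker_eq_bot, eq_bot_iff]
    intro x hx
    obtain ⟨a, rfl⟩ := Submodule.Quotient.mk_surjective _ x
    rw [LinearMap.mem_ker, hψ, Submodule.mapQ_apply, Submodule.Quotient.mk_eq_zero] at hx
    have hav : a * v ∈ m ^ (i + 1) := by
      have : (g a : A) ∈ m ^ (i + 1) := hx
      simpa [hg, LinearMap.toSpanSingleton_apply, smul_eq_mul] using this
    -- the ideal of elements killing v mod m^(i+1) equals m
    set I : Ideal A := Submodule.comap (LinearMap.toSpanSingleton A A v) (m ^ (i + 1)) with hI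
    have hmI : maximalIdeal A ≤ I := by
      intro b hb
      have h' : v * b ∈ m ^ i * m := Ideal.mul_mem_mul hv hb
      rw [← pow_succ] at h'
      show b • v ∈ m ^ (i + 1)
      rwa [smul_eq_mul, mul_comm]
    have hItop : I ≠ ⊤ := by
      intro htop
      have h1 : (1 : A) ∈ I := htop ▸ Submodule.mem_top
      have h2 : (1 : A) • v ∈ m ^ (i + 1) := h1
      rw [one_smul] at h2
      exact hv' h2
    have hIm : maximalIdeal A = I :=
      (IsLocalRing.maximalIdeal.isMaximal A).eq_of_le hItop hmI
    have haI : a ∈ I := by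
      show a • v ∈ m ^ (i + 1)
      rwa [smul_eq_mul]
    have ham : a ∈ maximalIdeal A := hIm ▸ haI
    simp only [Submodule.mem_bot]
    rwa [Submodule.Quotient.mk_eq_zero]
  haveI : Finite (↥Mi ⧸ N) := Quotient.finite _
  calc Nat.card (ResidueField A) = Nat.card (A ⧸ maximalIdeal A) := rfl
    _ ≤ Nat.card (↥Mi ⧸ N) := Nat.card_le_card_of_injective ψ hinj

/-- Counting: if `|m| = p^(2λ)` with `|residue field| = p^λ`, `λ ≥ 2`, then `m³ = 0`. -/
lemma aux_m3 (p lam : ℕ) (hp : p.Prime) (hlam : 2 ≤ lam)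
    (hres : Nat.card (ResidueField A) = p ^ lam)
    (hcard : Nat.card ↥(maximalIdeal A) = p ^ (2 * lam)) :
    (maximalIdeal A) ^ 3 = ⊥ := by
  set m := maximalIdeal A with hm
  by_contra h3
  -- strictness of the chain
  have h32 : m ^ 3 ≠ m ^ 2 := by
    intro h
    have : m ^ 2 = ⊥ := aux_stab (i := 2) h
    exact h3 (by rw [h, this])
  have h21 : m ^ 2 ≠ m ^ 1 := by
    intro h
    have h1 : m ^ 1 = ⊥ := aux_stab (i := 1) h
    have : m ^ 3 ≤ m ^ 1 := Ideal.pow_le_pow_right (by omega)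
    exact h3 (le_bot_iff.mp (h1 ▸ this))
  -- cardinality decompositions
  have key : ∀ i : ℕ,
      Nat.card ↥(m ^ i : Ideal A) =
        Nat.card ↥(m ^ (i + 1) : Ideal A) *
          Nat.card ((((m) ^ i : Ideal A)) ⧸
            (Submodule.comap ((m) ^ i : Ideal A).subtype ((m) ^ (i + 1)))) := by
    intro i
    have hle : (m : Ideal A) ^ (i + 1) ≤ m ^ i := Ideal.pow_le_pow_right i.le_succ
    set Mi : Submodule A A := (m ^ i : Ideal A)
    set N : Submodule A ↥Mi := Submodule.comap Mi.subtype (m ^ (i + 1))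
    have h1 : Nat.card ↥Mi = Nat.card ↥N * Nat.card (↥Mi ⧸ N) :=
      Submodule.card_eq_card_quotient_mul_card N
    have h2 : Nat.card ↥N = Nat.card ↥(m ^ (i + 1) : Ideal A) :=
      Nat.card_congr (Submodule.comapSubtypeEquivOfLe hle).toEquiv
    rw [h1, h2]
  have c1 : p ^ lam ≤ Nat.card ((((m) ^ 1 : Ideal A)) ⧸
      (Submodule.comap ((m) ^ 1 : Ideal A).subtype ((m) ^ 2))) := by
    have := aux_quot_card (A := A) 1 h21
    rwa [hres] at this
  have c2 : p ^ lam ≤ Nat.card ((((m) ^ 2 : Ideal A)) ⧸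
      (Submodule.comap ((m) ^ 2 : Ideal A).subtype ((m) ^ 3))) := by
    have := aux_quot_card (A := A) 2 h32
    rwa [hres] at this
  have c3 : 2 ≤ Nat.card ↥(m ^ 3 : Ideal A) := by
    obtain ⟨x, hx, hxne⟩ := Submodule.exists_mem_ne_zero_of_ne_bot h3
    have : Nontrivial ↥(m ^ 3 : Ideal A) :=
      ⟨⟨⟨x, hx⟩, 0, by simp [hxne]⟩⟩
    exact Finite.one_lt_card
  have hm1 : Nat.card ↥(m ^ 1 : Ideal A) = p ^ (2 * lam) := by
    rw [pow_one]; exact hcard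
  have e1 := key 1
  have e2 := key 2
  -- combine
  have hge : p ^ (2 * lam) ≥ 2 * (p ^ lam * p ^ lam) := by
    calc p ^ (2 * lam) = Nat.card ↥(m ^ 1 : Ideal A) := hm1.symm
      _ = Nat.card ↥(m ^ 2 : Ideal A) * _ := e1
      _ = (Nat.card ↥(m ^ 3 : Ideal A) * _) * _ := by rw [e2]
      _ ≥ (2 * p ^ lam) * p ^ lam := by
          apply Nat.mul_le_mul _ c1
          exact Nat.mul_le_mul c3 c2
      _ = 2 * (p ^ lam * p ^ lam) := by ring
  have hpl : p ^ lam * p ^ lam = p ^ (2 * lam) := by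
    rw [← pow_add]; ring_nf
  rw [hpl] at hge
  have hpos : 0 < p ^ (2 * lam) := Nat.pow_pos hp.pos
  omega

/-- If `m³ = 0` then every unit congruent to 1 mod `m` has order dividing `p²`. -/
lemma aux_exp (p lam : ℕ) (hp : p.Prime) (hlam : 1 ≤ lam)
    (hres : Nat.card (ResidueField A) = p ^ lam)
    (hm3 : (maximalIdeal A) ^ 3 = ⊥)
    (u : Aˣ) (hu : (u : A) - 1 ∈ maximalIdeal A) :
    u ^ (p ^ 2) = 1 := by
  have hpm : (p : A) ∈ maximalIdeal A := aux_p_mem p lam hp hlam hres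
  set m := maximalIdeal A with hm
  -- key step: raising 1 + x to the p-th power moves up the filtration
  have step : ∀ i : ℕ, 1 ≤ i → ∀ x ∈ m ^ i, ((1 : A) + x) ^ p - 1 ∈ m ^ (i + 1) := by
    intro i hi x hx
    rw [add_comm (1 : A) x, add_pow]
    simp only [one_pow, mul_one]
    rw [Finset.sum_range_succ']
    simp only [pow_zero, Nat.choose_zero_right, Nat.cast_one, one_mul]
    rw [add_sub_cancel_right]
    apply Submodule.sum_mem
    intro k hk
    rcases Nat.eq_zero_or_pos k with hk0 | hk0
    · subst hk0
      simp only [zero_add, pow_one, Nat.choose_one_right]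
      have : x * (p : A) ∈ m ^ i * m := Ideal.mul_mem_mul hx hpm
      rwa [← pow_succ] at this
    · have hxk : x ^ (k + 1) ∈ m ^ (i + 1) := by
        have h1 : x ^ (k + 1) ∈ (m ^ i) ^ (k + 1) := Ideal.pow_mem_pow hx _
        rw [← pow_mul] at h1
        refine Ideal.pow_le_pow_right ?_ h1
        calc i + 1 ≤ i + i := by omega
          _ = i * 2 := by ring
          _ ≤ i * (k + 1) := Nat.mul_le_mul_left i (by omega)
      exact Ideal.mul_mem_right _ _ hxk
  set x : A := (u : A) - 1 with hx
  have hx1 : x ∈ m ^ 1 := by rwa [pow_one]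
  have hu1 : (u : A) = 1 + x := by rw [hx]; ring
  have h1 : (u : A) ^ p - 1 ∈ m ^ 2 := by
    rw [hu1]; exact step 1 le_rfl x hx1
  set y : A := (u : A) ^ p - 1 with hy
  have h2 : ((1 : A) + y) ^ p - 1 ∈ m ^ 3 := step 2 (by omega) y h1
  rw [hm3, Ideal.mem_bot, sub_eq_zero] at h2
  have hcoe : ((u : A)) ^ (p ^ 2) = 1 := by
    have : (1 : A) + y = (u : A) ^ p := by rw [hy]; ring
    rw [this] at h2
    rw [pow_two, pow_mul]
    exact h2
  exact Units.ext (by push_cast; exact hcoe)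

end Aux

/-- For `p` prime and `λ ≥ 2`, the group `ℤ/p³ℤ × (ℤ/pℤ)^{2λ-3}` is not
isomorphic to `1 + m` for any finite local commutative ring `(A, m)` with residue field
`F_{p^λ}`. -/
theorem stmt10 (p lam : ℕ) (hp : p.Prime) (hlam : 2 ≤ lam)
    (A : Type*) [CommRing A] [IsLocalRing A] [Finite A]
    (hres : Nat.card (IsLocalRing.ResidueField A) = p ^ lam)
    (H : Subgroup Aˣ)
    (hH : ∀ u : Aˣ, u ∈ H ↔ (u : A) - 1 ∈ IsLocalRing.maximalIdeal A) :
    ¬ Nonempty (H ≃* Multiplicative (ZMod (p ^ 3) × (Fin (2 * lam - 3) → ZMod p))) := by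
  rintro ⟨e⟩
  -- the cardinality of the target group
  have hT : Nat.card (Multiplicative (ZMod (p ^ 3) × (Fin (2 * lam - 3) → ZMod p)))
      = p ^ (2 * lam) := by
    have : Nat.card (Multiplicative (ZMod (p ^ 3) × (Fin (2 * lam - 3) → ZMod p)))
        = Nat.card (ZMod (p ^ 3) × (Fin (2 * lam - 3) → ZMod p)) := rfl
    rw [this, Nat.card_prod, Nat.card_zmod, Nat.card_fun, Nat.card_zmod,
      Nat.card_eq_fintype_card, Fintype.card_fin, ← pow_add]
    congr 1
    omega
  -- H is in bijection with the maximal ideal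
  have hbij : H ≃ ↥(IsLocalRing.maximalIdeal A) := by
    refine ⟨fun u => ⟨((u : Aˣ) : A) - 1, (hH _).mp u.2⟩, fun x => ?_, ?_, ?_⟩
    · have hux : IsUnit ((1 : A) + (x : A)) := by
        have h := isUnit_one_sub_self_of_mem_nonunits (-(x : A))
          (by
            have : -(x : A) ∈ IsLocalRing.maximalIdeal A := neg_mem x.2
            exact this)
        rwa [sub_neg_eq_add] at h
      refine ⟨hux.unit, (hH _).mpr ?_⟩
      rw [IsUnit.unit_spec]
      simpa using x.2
    · intro u
      apply Subtype.ext
      apply Units.ext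
      simp [IsUnit.unit_spec]
    · intro x
      apply Subtype.ext
      simp [IsUnit.unit_spec]
  have hcardm : Nat.card ↥(IsLocalRing.maximalIdeal A) = p ^ (2 * lam) := by
    rw [← Nat.card_congr hbij, Nat.card_congr e.toEquiv, hT]
  -- m³ = 0
  have hm3 : (IsLocalRing.maximalIdeal A) ^ 3 = ⊥ := aux_m3 p lam hp hlam hres hcardm
  -- an element of order p³ in H
  set t : Multiplicative (ZMod (p ^ 3) × (Fin (2 * lam - 3) → ZMod p)) :=
    Multiplicative.ofAdd ((1 : ZMod (p ^ 3)), (0 : Fin (2 * lam - 3) → ZMod p)) with ht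
  have hordt : orderOf t = p ^ 3 := by
    rw [ht, orderOf_ofAdd_eq_addOrderOf, Prod.addOrderOf]
    simp only [addOrderOf_zero]
    rw [ZMod.addOrderOf_one]
    exact Nat.lcm_one_right _
  set h : H := e.symm t with hh
  have hordh : orderOf h = p ^ 3 := by
    rw [hh]
    exact (orderOf_injective e.symm.toMonoidHom e.symm.injective t).trans hordt
  -- but every element of H has order dividing p²
  have hpow : h ^ (p ^ 2) = 1 := by
    have hmem : ((h : Aˣ) : A) - 1 ∈ IsLocalRing.maximalIdeal A := (hH _).mp h.2
    have := aux_exp p lam hp (by omega) hres hm3 (h : Aˣ) hmem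
    apply Subtype.ext
    push_cast
    exact this
  have hdvd : orderOf h ∣ p ^ 2 := orderOf_dvd_of_pow_eq_one hpow
  rw [hordh] at hdvd
  have hle : p ^ 3 ≤ p ^ 2 := Nat.le_of_dvd (Nat.pow_pos hp.pos) hdvd
  have : p ^ 2 < p ^ 3 := Nat.pow_lt_pow_right hp.one_lt (by omega)
  omega
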